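/- Let ω be an equilibrium stress for a configuration p in ℝᵈ with n points whose affine span is ℝᵈ, and suppose the associated stress matrix Ω has rank n − d − 1. If q is any configuration of n points in ℝᵈ for which ω is also an equilibrium stress, then q is an affine image of p: there exist a d×d matrix A and a vector v with qᵢ = A pᵢ + v for all i. -/

import Mathlib

/-- The stress matrix of a stress `ω`: off-diagonal entries `-ω i j`, diagonal
entries chosen so that all row sums are zero. -/
def stressMatrix {n : ℕ} (ω : Fin n → Fin n → ℝ) : Matrix (Fin n) (Fin n) ℝ :=
  fun i j => if i = j then ∑ k, ω i k else -(ω i j)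

/-- The linear map sending `(c, a)` to the vector `i ↦ c + ∑ l, a l * p i l`. -/
noncomputable def affT {n d : ℕ} (p : Fin n → Fin d → ℝ) :
    (ℝ × (Fin d → ℝ)) →ₗ[ℝ] (Fin n → ℝ) where
  toFun ca := fun i => ca.1 + ∑ l, ca.2 l * p i l
  map_add' x y := by
    funext i
    simp [Finset.sum_add_distrib, add_mul]
    ring
  map_smul' c x := by
    funext i
    simp [Finset.mul_sum, mul_assoc, mul_add]

theorem maximal_rank_implies_universal
    (n d : ℕ) (p : Fin n → Fin d → ℝ) (ω : Fin n → Fin n → ℝ)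
    (hsymm : ∀ i j, ω i j = ω j i) (hdiag : ∀ i, ω i i = 0)
    (hequil : ∀ j, ∑ i, ω i j • (p i - p j) = 0)
    (hspan : affineSpan ℝ (Set.range p) = ⊤)
    (hrank : (stressMatrix ω).rank = n - d - 1)
    (q : Fin n → Fin d → ℝ)
    (hequilq : ∀ j, ∑ i, ω i j • (q i - q j) = 0) :
    ∃ (A : Matrix (Fin d) (Fin d) ℝ) (v : Fin d → ℝ),
      ∀ i, q i = A.mulVec (p i) + v := by
  classical
  set Ω := stressMatrix ω with hΩ
  -- Key formula for the stress matrix acting on a vector.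
  have key : ∀ (x : Fin n → ℝ) (j : Fin n),
      Ω.mulVec x j = ∑ i, ω j i * (x j - x i) := by
    intro x j
    have : Ω.mulVec x j = ∑ i, (if j = i then (∑ k, ω j k) else -(ω j i)) * x i := by
      simp [Matrix.mulVec, dotProduct, hΩ, stressMatrix]
    rw [this]
    have hsplit : ∀ i : Fin n,
        (if j = i then (∑ k, ω j k) else -(ω j i)) * x i
          = (if j = i then (∑ k, ω j k) * x i + ω j i * x i else 0) + (-(ω j i) * x i) := by
      intro i
      by_cases h : j = i <;> simp [h]
    rw [Finset.sum_congr rfl (fun i _ => hsplit i), Finset.sum_add_distrib,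
      Finset.sum_ite_eq (Finset.univ) j]
    simp [hdiag j, mul_sub, Finset.sum_sub_distrib, Finset.sum_mul]
    ring
  -- If ω is an equilibrium stress for r, each coordinate of r is in the kernel.
  have hker : ∀ (r : Fin n → Fin d → ℝ),
      (∀ j, ∑ i, ω i j • (r i - r j) = 0) →
      ∀ k, Ω.mulVec (fun i => r i k) = 0 := by
    intro r hr k
    funext j
    have h1 : ∑ i, ω i j * (r i k - r j k) = 0 := by
      have := congrFun (hr j) k
      simpa [Finset.sum_apply] using this
    have h2 : ∑ i, ω j i * (r j k - r i k) = 0 := by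
      have : ∑ i, ω j i * (r j k - r i k) = -∑ i, ω i j * (r i k - r j k) := by
        rw [← Finset.sum_neg_distrib]
        refine Finset.sum_congr rfl fun i _ => ?_
        rw [hsymm i j]; ring
      rw [this, h1, neg_zero]
    simp [key, h2]
  have hkerP : ∀ k, Ω.mulVec (fun i => p i k) = 0 := hker p hequil
  have hkerQ : ∀ k, Ω.mulVec (fun i => q i k) = 0 := hker q hequilq
  have hker1 : Ω.mulVec (fun _ => (1 : ℝ)) = 0 := by
    funext j
    simp [key]
  -- The linear map T.
  set T := affT p with hT
  -- T is injective.
  have hTinj : Function.Injective T := by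
    rw [← LinearMap.ker_eq_bot]
    rw [Submodule.eq_bot_iff]
    rintro ⟨c, a⟩ hca
    have hz : ∀ i, c + ∑ l, a l * p i l = 0 := by
      intro i
      exact congrFun (LinearMap.mem_ker.mp hca) i
    -- the affine function x ↦ c + ∑ a l * x l vanishes on all of ℝᵈ
    have hall : ∀ x : Fin d → ℝ, c + ∑ l, a l * x l = 0 := by
      intro x
      have hx : x ∈ affineSpan ℝ (Set.range p) := by rw [hspan]; trivial
      refine affineSpan_induction (p := fun y => c + ∑ l, a l * y l = 0) hx ?_ ?_
      · rintro y ⟨i, rfl⟩; exact hz i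
      · intro t u v w hu hv hw
        have : ∀ l, (t • (u -ᵥ v) +ᵥ w) l = t * (u l - v l) + w l := by
          intro l; simp [vsub_eq_sub, vadd_eq_add]
        rw [Finset.sum_congr rfl (fun l _ => by rw [this l])]
        have hsum : ∑ l, a l * (t * (u l - v l) + w l)
            = t * (∑ l, a l * u l) - t * (∑ l, a l * v l) + ∑ l, a l * w l := by
          rw [Finset.mul_sum, Finset.mul_sum, ← Finset.sum_sub_distrib, ← Finset.sum_add_distrib]
          exact Finset.sum_congr rfl fun l _ => by ring
        rw [hsum]
        have hu' : ∑ l, a l * u l = -c := by linarith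
        have hv' : ∑ l, a l * v l = -c := by linarith
        have hw' : ∑ l, a l * w l = -c := by linarith
        rw [hu', hv', hw']; ring
    have hc : c = 0 := by
      have := hall 0
      simpa using this
    have ha : a = 0 := by
      funext l
      have := hall (Pi.single l 1)
      rw [hc] at this
      simpa [Pi.single_apply, Finset.sum_ite_eq] using this
    simp [hc, ha]
  -- range T is contained in the kernel of Ω.
  have hrange_le : LinearMap.range T ≤ LinearMap.ker Ω.mulVecLin := by
    rintro x ⟨⟨c, a⟩, rfl⟩
    rw [LinearMap.mem_ker]
    have : (T (c, a) : Fin n → ℝ) = c • (fun _ => (1 : ℝ)) + ∑ l, a l • (fun i => p i l) := by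
      funext i
      simp [hT, affT, Finset.sum_apply]
    rw [Matrix.mulVecLin_apply, this]
    rw [Matrix.mulVec_add, Matrix.mulVec_smul, hker1]
    have : Ω.mulVec (∑ l, a l • fun i => p i l) = 0 := by
      have hms : Ω.mulVec (∑ l, a l • fun i => p i l)
          = ∑ l, Ω.mulVec (a l • fun i => p i l) := by
        simpa only [Matrix.mulVecLin_apply] using
          map_sum Ω.mulVecLin (fun l => a l • fun i => p i l) Finset.univ
      rw [hms]
      refine Finset.sum_eq_zero fun l _ => ?_
      rw [Matrix.mulVec_smul, hkerP l, smul_zero]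
    rw [this]
    simp
  -- finrank of range T is d + 1.
  have hfinT : Module.finrank ℝ (LinearMap.range T) = d + 1 := by
    rw [LinearMap.finrank_range_of_inj hTinj]
    simp [Module.finrank_prod]
    ring
  -- finrank of the kernel.
  have hrn : (stressMatrix ω).rank + Module.finrank ℝ (LinearMap.ker Ω.mulVecLin) = n := by
    have := LinearMap.finrank_range_add_finrank_ker (Ω.mulVecLin)
    rw [Module.finrank_pi] at this
    simpa [Matrix.rank, hΩ] using this
  have hnd : d + 1 ≤ n := by
    have h1 : Module.finrank ℝ (LinearMap.range T) ≤ Module.finrank ℝ (Fin n → ℝ) :=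
      Submodule.finrank_le _
    rw [hfinT, Module.finrank_pi] at h1
    simpa using h1
  have hkerdim : Module.finrank ℝ (LinearMap.ker Ω.mulVecLin) = d + 1 := by
    rw [hrank] at hrn
    omega
  -- So range T = ker Ω.
  have heq : LinearMap.range T = LinearMap.ker Ω.mulVecLin :=
    Submodule.eq_of_le_of_finrank_eq hrange_le (by rw [hfinT, hkerdim])
  -- Each coordinate of q is in range T.
  have hq : ∀ k, ∃ ca : ℝ × (Fin d → ℝ), T ca = fun i => q i k := by
    intro k
    have : (fun i => q i k) ∈ LinearMap.ker Ω.mulVecLin := by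
      rw [LinearMap.mem_ker, Matrix.mulVecLin_apply]
      exact hkerQ k
    rw [← heq] at this
    exact this
  choose ca hca using hq
  refine ⟨fun k l => (ca k).2 l, fun k => (ca k).1, fun i => ?_⟩
  funext k
  have := congrFun (hca k) i
  simp [hT, affT] at this
  rw [Pi.add_apply]; change q i k = ∑ l, (ca k).2 l * p i l + (ca k).1
  rw [← this]
  ring
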